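/- Let t > 0 be a real number and let z be a nonzero real number with z² = t. Then h_{2L_n}(t) = h_{L_{n-1}-L_n}(z⁻¹) · h_{L_{n-1}+L_n}(−1) · h_{L_{n-1}+L_n}(−z⁻¹)⁻¹. -/

import Mathlib

open Matrix

noncomputable section

/-- 2n×2n real matrices. -/
abbrev SpMat (n : ℕ) := Matrix (Fin (2 * n)) (Fin (2 * n)) ℝ

/-- `EM n k l` is the elementary matrix with (k,l) entry 1 and all other entries 0. -/
def EM (n : ℕ) (k l : Fin (2 * n)) : SpMat n := Matrix.single k l 1

/- All indices below are 0-based: the 1-based indices n-1, n, 2n-1, 2n of the paper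
become n-2, n-1, 2n-2, 2n-1. -/

/-- x_{L_{n-1}-L_n}(t) = I + t (e_{n-1,n} - e_{2n,2n-1}). -/
def xpm (n : ℕ) (hn : 2 ≤ n) (t : ℝ) : SpMat n :=
  1 + t • (EM n ⟨n - 2, by omega⟩ ⟨n - 1, by omega⟩
    - EM n ⟨2 * n - 1, by omega⟩ ⟨2 * n - 2, by omega⟩)

/-- x_{L_n-L_{n-1}}(t) = I + t (e_{n,n-1} - e_{2n-1,2n}). -/
def xmp (n : ℕ) (hn : 2 ≤ n) (t : ℝ) : SpMat n :=
  1 + t • (EM n ⟨n - 1, by omega⟩ ⟨n - 2, by omega⟩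
    - EM n ⟨2 * n - 2, by omega⟩ ⟨2 * n - 1, by omega⟩)

/-- x_{L_{n-1}+L_n}(t) = I + t (e_{n-1,2n} + e_{n,2n-1}). -/
def xpp (n : ℕ) (hn : 2 ≤ n) (t : ℝ) : SpMat n :=
  1 + t • (EM n ⟨n - 2, by omega⟩ ⟨2 * n - 1, by omega⟩
    + EM n ⟨n - 1, by omega⟩ ⟨2 * n - 2, by omega⟩)

/-- x_{-L_{n-1}-L_n}(t) = I + t (e_{2n,n-1} + e_{2n-1,n}). -/
def xmm (n : ℕ) (hn : 2 ≤ n) (t : ℝ) : SpMat n :=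
  1 + t • (EM n ⟨2 * n - 1, by omega⟩ ⟨n - 2, by omega⟩
    + EM n ⟨2 * n - 2, by omega⟩ ⟨n - 1, by omega⟩)

/-- x_{2L_n}(t) = I + t e_{n,2n}. -/
def x2n (n : ℕ) (hn : 2 ≤ n) (t : ℝ) : SpMat n :=
  1 + t • EM n ⟨n - 1, by omega⟩ ⟨2 * n - 1, by omega⟩

/-- x_{-2L_n}(t) = I + t e_{2n,n}. -/
def xm2n (n : ℕ) (hn : 2 ≤ n) (t : ℝ) : SpMat n :=
  1 + t • EM n ⟨2 * n - 1, by omega⟩ ⟨n - 1, by omega⟩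

/-- x_{2L_{n-1}}(t) = I + t e_{n-1,2n-1}. -/
def x2n1 (n : ℕ) (hn : 2 ≤ n) (t : ℝ) : SpMat n :=
  1 + t • EM n ⟨n - 2, by omega⟩ ⟨2 * n - 2, by omega⟩

/-- x_{-2L_{n-1}}(t) = I + t e_{2n-1,n-1}. -/
def xm2n1 (n : ℕ) (hn : 2 ≤ n) (t : ℝ) : SpMat n :=
  1 + t • EM n ⟨2 * n - 2, by omega⟩ ⟨n - 2, by omega⟩

/-- w_{L_{n-1}-L_n}(t). -/
def wpm (n : ℕ) (hn : 2 ≤ n) (t : ℝ) : SpMat n :=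
  xpm n hn t * xmp n hn (-t⁻¹) * xpm n hn t

/-- w_{L_{n-1}+L_n}(t). -/
def wpp (n : ℕ) (hn : 2 ≤ n) (t : ℝ) : SpMat n :=
  xpp n hn t * xmm n hn (-t⁻¹) * xpp n hn t

/-- w_{2L_n}(t). -/
def w2n (n : ℕ) (hn : 2 ≤ n) (t : ℝ) : SpMat n :=
  x2n n hn t * xm2n n hn (-t⁻¹) * x2n n hn t

/-- w_{2L_{n-1}}(t). -/
def w2n1 (n : ℕ) (hn : 2 ≤ n) (t : ℝ) : SpMat n :=
  x2n1 n hn t * xm2n1 n hn (-t⁻¹) * x2n1 n hn t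

/-- h_{L_{n-1}-L_n}(t) = w_{L_{n-1}-L_n}(t) w_{L_{n-1}-L_n}(1)⁻¹. -/
def hpm (n : ℕ) (hn : 2 ≤ n) (t : ℝ) : SpMat n :=
  wpm n hn t * (wpm n hn 1)⁻¹

/-- h_{L_{n-1}+L_n}(t) = w_{L_{n-1}+L_n}(t) w_{L_{n-1}+L_n}(1)⁻¹. -/
def hpp (n : ℕ) (hn : 2 ≤ n) (t : ℝ) : SpMat n :=
  wpp n hn t * (wpp n hn 1)⁻¹

/-- h_{2L_n}(t) = w_{2L_n}(t) w_{2L_n}(1)⁻¹. -/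
def h2n (n : ℕ) (hn : 2 ≤ n) (t : ℝ) : SpMat n :=
  w2n n hn t * (w2n n hn 1)⁻¹

namespace St8
set_option linter.unusedSectionVars false
variable {N : ℕ}
def gE (a b : Fin N) : Matrix (Fin N) (Fin N) ℝ := Matrix.single a b 1
lemma gE_mul_same (a b c : Fin N) : gE a b * gE b c = gE a c := by
  simp [gE, Matrix.single_mul_single_same]
lemma gE_mul_ne (a : Fin N) {b c : Fin N} (h : b ≠ c) (d : Fin N) :
    gE a b * gE c d = 0 := Matrix.single_mul_single_of_ne _ _ _ _ h _

def W2 (q s : Fin N) (t : ℝ) : Matrix (Fin N) (Fin N) ℝ :=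
  1 - gE q q - gE s s + t • gE q s - t⁻¹ • gE s q
def H2 (q s : Fin N) (t : ℝ) : Matrix (Fin N) (Fin N) ℝ :=
  1 + (t-1) • gE q q + (t⁻¹-1) • gE s s
def Wpm (p q r s : Fin N) (t : ℝ) : Matrix (Fin N) (Fin N) ℝ :=
  1 - gE p p - gE q q - gE r r - gE s s
    + t • gE p q - t • gE s r - t⁻¹ • gE q p + t⁻¹ • gE r s
def Hpm (p q r s : Fin N) (t : ℝ) : Matrix (Fin N) (Fin N) ℝ :=
  1 + (t-1) • (gE p p + gE s s) + (t⁻¹-1) • (gE q q + gE r r)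
def Wpp (p q r s : Fin N) (t : ℝ) : Matrix (Fin N) (Fin N) ℝ :=
  1 - gE p p - gE q q - gE r r - gE s s
    + t • gE p s + t • gE q r - t⁻¹ • gE s p - t⁻¹ • gE r q
def Hpp (p q r s : Fin N) (t : ℝ) : Matrix (Fin N) (Fin N) ℝ :=
  1 + (t-1) • (gE p p + gE q q) + (t⁻¹-1) • (gE r r + gE s s)

def gw2 (q s : Fin N) (t : ℝ) : Matrix (Fin N) (Fin N) ℝ :=
  (1 + t • gE q s) * (1 + (-t⁻¹) • gE s q) * (1 + t • gE q s)
def gwpm (p q r s : Fin N) (t : ℝ) : Matrix (Fin N) (Fin N) ℝ :=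
  (1 + t • (gE p q - gE s r)) * (1 + (-t⁻¹) • (gE q p - gE r s))
    * (1 + t • (gE p q - gE s r))
def gwpp (p q r s : Fin N) (t : ℝ) : Matrix (Fin N) (Fin N) ℝ :=
  (1 + t • (gE p s + gE q r)) * (1 + (-t⁻¹) • (gE s p + gE r q))
    * (1 + t • (gE p s + gE q r))
def gh2 (q s : Fin N) (t : ℝ) : Matrix (Fin N) (Fin N) ℝ := gw2 q s t * (gw2 q s 1)⁻¹
def ghpm (p q r s : Fin N) (t : ℝ) : Matrix (Fin N) (Fin N) ℝ :=
  gwpm p q r s t * (gwpm p q r s 1)⁻¹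
def ghpp (p q r s : Fin N) (t : ℝ) : Matrix (Fin N) (Fin N) ℝ :=
  gwpp p q r s t * (gwpp p q r s 1)⁻¹

section
variable (p q r s : Fin N)
variable (hpq : p ≠ q) (hpr : p ≠ r) (hps : p ≠ s) (hqr : q ≠ r) (hqs : q ≠ s) (hrs : r ≠ s)
include hpq hpr hps hqr hqs hrs

lemma L1 (t : ℝ) (ht : t ≠ 0) : gw2 q s t = W2 q s t := by
  have hsq := hqs.symm
  unfold gw2 W2
  simp only [mul_add, add_mul, mul_sub, sub_mul, one_mul, mul_one, smul_mul_assoc,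
    mul_smul_comm, smul_add, smul_sub, smul_smul, smul_zero, add_zero, zero_add, neg_mul, mul_neg, neg_smul, smul_neg, neg_zero, neg_neg,
    gE_mul_same, gE_mul_ne, hqs, hsq, ne_eq, not_false_iff]
  match_scalars <;> (field_simp; try ring)

lemma L2 (t : ℝ) (ht : t ≠ 0) : gwpm p q r s t = Wpm p q r s t := by
  unfold gwpm
  have hqp := hpq.symm; have hrp := hpr.symm; have hsp := hps.symm
  have hrq := hqr.symm; have hsq := hqs.symm; have hsr := hrs.symm
  unfold Wpm
  simp only [mul_add, add_mul, mul_sub, sub_mul, one_mul, mul_one, smul_mul_assoc,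
    mul_smul_comm, smul_add, smul_sub, smul_smul, smul_zero, add_zero, zero_add,
    sub_zero, zero_sub, neg_neg, neg_mul, mul_neg, neg_smul, smul_neg, neg_zero, gE_mul_same, gE_mul_ne,
    hpq, hpr, hps, hqr, hqs, hrs, hqp, hrp, hsp, hrq, hsq, hsr, ne_eq, not_false_iff]
  match_scalars <;> (field_simp; try ring)

lemma L3 (t : ℝ) (ht : t ≠ 0) : gwpp p q r s t = Wpp p q r s t := by
  unfold gwpp
  have hqp := hpq.symm; have hrp := hpr.symm; have hsp := hps.symm
  have hrq := hqr.symm; have hsq := hqs.symm; have hsr := hrs.symm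
  unfold Wpp
  simp only [mul_add, add_mul, mul_sub, sub_mul, one_mul, mul_one, smul_mul_assoc,
    mul_smul_comm, smul_add, smul_sub, smul_smul, smul_zero, add_zero, zero_add,
    sub_zero, zero_sub, neg_neg, neg_mul, mul_neg, neg_smul, smul_neg, neg_zero, gE_mul_same, gE_mul_ne,
    hpq, hpr, hps, hqr, hqs, hrs, hqp, hrp, hsp, hrq, hsq, hsr, ne_eq, not_false_iff]
  match_scalars <;> (field_simp; try ring)

lemma L4 (t : ℝ) (ht : t ≠ 0) : W2 q s t * W2 q s (-1) = H2 q s t := by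
  have hsq := hqs.symm
  unfold W2 H2
  simp only [mul_add, add_mul, mul_sub, sub_mul, one_mul, mul_one, smul_mul_assoc,
    mul_smul_comm, smul_add, smul_sub, smul_smul, smul_zero, add_zero, zero_add, neg_mul, mul_neg, neg_smul, smul_neg, neg_zero, neg_neg,
    gE_mul_same, gE_mul_ne, hqs, hsq, ne_eq, not_false_iff]
  match_scalars <;> (field_simp; try ring)

lemma L5 : W2 q s 1 * W2 q s (-1) = 1 := by
  rw [L4 p q r s hpq hpr hps hqr hqs hrs 1 one_ne_zero]; simp [H2]

lemma L6 (t : ℝ) (ht : t ≠ 0) : Wpm p q r s t * Wpm p q r s (-1) = Hpm p q r s t := by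
  have hqp := hpq.symm; have hrp := hpr.symm; have hsp := hps.symm
  have hrq := hqr.symm; have hsq := hqs.symm; have hsr := hrs.symm
  unfold Wpm Hpm
  simp only [mul_add, add_mul, mul_sub, sub_mul, one_mul, mul_one, smul_mul_assoc,
    mul_smul_comm, smul_add, smul_sub, smul_smul, smul_zero, add_zero, zero_add,
    sub_zero, zero_sub, neg_neg, neg_mul, mul_neg, neg_smul, smul_neg, neg_zero, gE_mul_same, gE_mul_ne,
    hpq, hpr, hps, hqr, hqs, hrs, hqp, hrp, hsp, hrq, hsq, hsr, ne_eq, not_false_iff]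
  match_scalars <;> (field_simp; try ring)

lemma L7 : Wpm p q r s 1 * Wpm p q r s (-1) = 1 := by
  rw [L6 p q r s hpq hpr hps hqr hqs hrs 1 one_ne_zero]; simp [Hpm]

lemma L8 (t : ℝ) (ht : t ≠ 0) : Wpp p q r s t * Wpp p q r s (-1) = Hpp p q r s t := by
  have hqp := hpq.symm; have hrp := hpr.symm; have hsp := hps.symm
  have hrq := hqr.symm; have hsq := hqs.symm; have hsr := hrs.symm
  unfold Wpp Hpp
  simp only [mul_add, add_mul, mul_sub, sub_mul, one_mul, mul_one, smul_mul_assoc,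
    mul_smul_comm, smul_add, smul_sub, smul_smul, smul_zero, add_zero, zero_add,
    sub_zero, zero_sub, neg_neg, neg_mul, mul_neg, neg_smul, smul_neg, neg_zero, gE_mul_same, gE_mul_ne,
    hpq, hpr, hps, hqr, hqs, hrs, hqp, hrp, hsp, hrq, hsq, hsr, ne_eq, not_false_iff]
  match_scalars <;> (field_simp; try ring)

lemma L9 : Wpp p q r s 1 * Wpp p q r s (-1) = 1 := by
  rw [L8 p q r s hpq hpr hps hqr hqs hrs 1 one_ne_zero]; simp [Hpp]

lemma L10 (z : ℝ) (hz : z ≠ 0) : Hpp p q r s (-z⁻¹) * Hpp p q r s (-z) = 1 := by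
  have hqp := hpq.symm; have hrp := hpr.symm; have hsp := hps.symm
  have hrq := hqr.symm; have hsq := hqs.symm; have hsr := hrs.symm
  unfold Hpp
  simp only [mul_add, add_mul, mul_sub, sub_mul, one_mul, mul_one, smul_mul_assoc,
    mul_smul_comm, smul_add, smul_sub, smul_smul, smul_zero, add_zero, zero_add,
    sub_zero, zero_sub, neg_neg, neg_mul, mul_neg, neg_smul, smul_neg, neg_zero, gE_mul_same, gE_mul_ne,
    hpq, hpr, hps, hqr, hqs, hrs, hqp, hrp, hsp, hrq, hsq, hsr, ne_eq, not_false_iff]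
  match_scalars <;> (field_simp; try ring)

lemma L11 (z : ℝ) (hz : z ≠ 0) :
    Hpm p q r s z⁻¹ * Hpp p q r s (-1) * Hpp p q r s (-z) = H2 q s (z^2) := by
  have hqp := hpq.symm; have hrp := hpr.symm; have hsp := hps.symm
  have hrq := hqr.symm; have hsq := hqs.symm; have hsr := hrs.symm
  unfold Hpm Hpp H2
  simp only [mul_add, add_mul, mul_sub, sub_mul, one_mul, mul_one, smul_mul_assoc,
    mul_smul_comm, smul_add, smul_sub, smul_smul, smul_zero, add_zero, zero_add,
    sub_zero, zero_sub, neg_neg, neg_mul, mul_neg, neg_smul, smul_neg, neg_zero, gE_mul_same, gE_mul_ne,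
    hpq, hpr, hps, hqr, hqs, hrs, hqp, hrp, hsp, hrq, hsq, hsr, ne_eq, not_false_iff]
  match_scalars <;> (field_simp; try ring)

lemma master (z : ℝ) (hz : z ≠ 0) :
    gh2 q s (z^2) = ghpm p q r s z⁻¹ * ghpp p q r s (-1) * (ghpp p q r s (-z⁻¹))⁻¹ := by
  have hz2 : (z:ℝ)^2 ≠ 0 := pow_ne_zero _ hz
  have hzi : z⁻¹ ≠ 0 := inv_ne_zero hz
  have h1 : (-1 : ℝ) ≠ 0 := by norm_num
  have hnzi : -z⁻¹ ≠ 0 := neg_ne_zero.mpr hzi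
  have e2 : (gw2 q s 1)⁻¹ = W2 q s (-1) := by
    apply Matrix.inv_eq_right_inv
    rw [L1 p q r s hpq hpr hps hqr hqs hrs 1 one_ne_zero]
    exact L5 p q r s hpq hpr hps hqr hqs hrs
  have epm : (gwpm p q r s 1)⁻¹ = Wpm p q r s (-1) := by
    apply Matrix.inv_eq_right_inv
    rw [L2 p q r s hpq hpr hps hqr hqs hrs 1 one_ne_zero]
    exact L7 p q r s hpq hpr hps hqr hqs hrs
  have epp : (gwpp p q r s 1)⁻¹ = Wpp p q r s (-1) := by
    apply Matrix.inv_eq_right_inv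
    rw [L3 p q r s hpq hpr hps hqr hqs hrs 1 one_ne_zero]
    exact L9 p q r s hpq hpr hps hqr hqs hrs
  have eppinv : (ghpp p q r s (-z⁻¹))⁻¹ = Hpp p q r s (-z) := by
    apply Matrix.inv_eq_right_inv
    rw [ghpp, L3 p q r s hpq hpr hps hqr hqs hrs _ hnzi, epp,
      L8 p q r s hpq hpr hps hqr hqs hrs _ hnzi]
    exact L10 p q r s hpq hpr hps hqr hqs hrs z hz
  rw [gh2, ghpm, ghpp, e2, epm, epp, eppinv,
    L1 p q r s hpq hpr hps hqr hqs hrs _ hz2,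
    L2 p q r s hpq hpr hps hqr hqs hrs _ hzi,
    L3 p q r s hpq hpr hps hqr hqs hrs _ h1,
    L4 p q r s hpq hpr hps hqr hqs hrs _ hz2,
    L6 p q r s hpq hpr hps hqr hqs hrs _ hzi,
    L8 p q r s hpq hpr hps hqr hqs hrs _ h1]
  exact (L11 p q r s hpq hpr hps hqr hqs hrs z hz).symm

end
end St8

/-- for t > 0 and z ≠ 0 with z² = t,
h_{2L_n}(t) = h_{L_{n-1}-L_n}(z⁻¹) h_{L_{n-1}+L_n}(-1) h_{L_{n-1}+L_n}(-z⁻¹)⁻¹. -/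
theorem statement8 {n : ℕ} (hn : 2 ≤ n) (t z : ℝ) (ht : 0 < t) (hz : z ≠ 0)
    (hzt : z ^ 2 = t) :
    h2n n hn t = hpm n hn z⁻¹ * hpp n hn (-1) * (hpp n hn (-z⁻¹))⁻¹ := by
  have hP : n - 2 < 2 * n := by omega
  have hQ : n - 1 < 2 * n := by omega
  have hR : 2 * n - 2 < 2 * n := by omega
  have hS : 2 * n - 1 < 2 * n := by omega
  have hPQ : (⟨n-2, hP⟩ : Fin (2*n)) ≠ ⟨n-1, hQ⟩ := by simp [Fin.ext_iff]; omega
  have hPR : (⟨n-2, hP⟩ : Fin (2*n)) ≠ ⟨2*n-2, hR⟩ := by simp [Fin.ext_iff]; omega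
  have hPS : (⟨n-2, hP⟩ : Fin (2*n)) ≠ ⟨2*n-1, hS⟩ := by simp [Fin.ext_iff]; omega
  have hQR : (⟨n-1, hQ⟩ : Fin (2*n)) ≠ ⟨2*n-2, hR⟩ := by simp [Fin.ext_iff]; omega
  have hQS : (⟨n-1, hQ⟩ : Fin (2*n)) ≠ ⟨2*n-1, hS⟩ := by simp [Fin.ext_iff]; omega
  have hRS : (⟨2*n-2, hR⟩ : Fin (2*n)) ≠ ⟨2*n-1, hS⟩ := by simp [Fin.ext_iff]; omega
  rw [← hzt]
  exact St8.master ⟨n-2, hP⟩ ⟨n-1, hQ⟩ ⟨2*n-2, hR⟩ ⟨2*n-1, hS⟩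
    hPQ hPR hPS hQR hQS hRS z hz

end
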